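/- arXiv:1107.0388 — 2 statements merged into one kernel-verified Lean document; each statement's English description precedes it below -/
import Mathlib

section
/- Let $R = \mathbb{C}[x,y]/(x^2 - y^p)$ with $p > 2$ odd, localized at the maximal ideal $(x,y)$. The local Brian\c{c}on-Skoda number of $R$ is $\frac{p-1}{2}$: i.e., $\frac{p-1}{2}$ is the smallest integer $\tilde\mu_0$ such that for every element $g$ of the maximal ideal and every $\psi$, if $|\psi| \le C|g|^{1+\tilde\mu_0}$ holds in a neighborhood of the origin on the curve $\{x^2 = y^p\}$, then $\psi \in (g)$. -/
open Filter

/-- Germ at `0` of an element of `R = ℂ{t²,t^p} ⊂ ℂ{t}`, the local ring of the cusp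
`x² = y^p` pulled back by the normalization `t ↦ (t^p, t²)`: a function analytic at
`0` whose odd Taylor coefficients of order `< p` vanish. -/
def InCusp (p : ℕ) (f : ℂ → ℂ) : Prop :=
  AnalyticAt ℂ f 0 ∧ ∀ k : ℕ, k < p → Odd k → iteratedDeriv k f 0 = 0

/-- The Briançon–Skoda property of `R = ℂ[x,y]/(x² - y^p)` localized at `(x,y)`,
with exponent `μ̃₀`: for every `g` in the maximal ideal and every `ψ`, if
`|ψ| ≤ C|g|^{1+μ̃₀}` near the origin on the curve `{x² = y^p}` (equivalently,
after pullback by the normalization, near `t = 0`), then `ψ ∈ (g)`. -/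
def CuspBS (p μ : ℕ) : Prop :=
  ∀ g ψ : ℂ → ℂ, InCusp p g → InCusp p ψ → g 0 = 0 →
    (∃ C : ℝ, ∀ᶠ t in nhds (0 : ℂ),
      ‖ψ t‖ ≤ C * ‖g t‖ ^ (1 + μ)) →
    ∃ ρ : ℂ → ℂ, InCusp p ρ ∧ ∀ᶠ t in nhds (0 : ℂ), ψ t = g t * ρ t

open Topology



section Aux

lemma coeff_iteratedDeriv {f : ℂ → ℂ} {q : FormalMultilinearSeries ℂ ℂ ℂ}
    (h : HasFPowerSeriesAt f q 0) (n : ℕ) :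
    iteratedDeriv n f 0 = n.factorial • q.coeff n := by
  obtain ⟨r, hr⟩ := h
  rw [iteratedDeriv_eq_iteratedFDeriv, ← hr.factorial_smul (1:ℂ) n]
  rfl

lemma iteratedDeriv_eq_zero_iff' {f : ℂ → ℂ} {q : FormalMultilinearSeries ℂ ℂ ℂ}
    (h : HasFPowerSeriesAt f q 0) (n : ℕ) :
    iteratedDeriv n f 0 = 0 ↔ q n = 0 := by
  rw [coeff_iteratedDeriv h n, ← FormalMultilinearSeries.coeff_eq_zero, smul_eq_zero]
  simp [Nat.factorial_ne_zero]

lemma order_le_iff {f : ℂ → ℂ} (hf : AnalyticAt ℂ f 0) (n : ℕ) :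
    ↑n ≤ analyticOrderAt f 0 ↔ ∀ k < n, iteratedDeriv k f 0 = 0 := by
  obtain ⟨q, hq⟩ := id hf
  by_cases hq0 : q = 0
  · subst hq0
    have hzero : ∀ᶠ z in 𝓝 (0:ℂ), f z = 0 := by
      filter_upwards [hasFPowerSeriesAt_iff'.mp hq] with z hz
      have h0 : HasSum (fun n : ℕ => (z - 0) ^ n • (0 : FormalMultilinearSeries ℂ ℂ ℂ).coeff n)
          (0 : ℂ) := by
        simpa [FormalMultilinearSeries.coeff] using (hasSum_zero : HasSum (fun _ : ℕ => (0:ℂ)) 0)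
      exact hz.unique h0
    rw [(analyticOrderAt_eq_top).mpr hzero]
    simp only [le_top, true_iff]
    intro k _
    rw [iteratedDeriv_eq_zero_iff' hq k]
    rfl
  · have horder : analyticOrderAt f 0 = (q.order : ℕ∞) := by
      rw [hf.analyticOrderAt_eq_natCast]
      exact ⟨_, (hq.has_fpower_series_iterate_dslope_fslope q.order).analyticAt,
        hq.iterate_dslope_fslope_ne_zero hq0,
        by simpa using Filter.Eventually.of_forall hq.eq_pow_order_mul_iterate_dslope⟩
    rw [horder, Nat.cast_le]
    constructor
    · intro h k hk
      exact (iteratedDeriv_eq_zero_iff' hq k).mpr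
        (q.apply_eq_zero_of_lt_order (lt_of_lt_of_le hk h))
    · intro h
      by_contra hlt
      push_neg at hlt
      exact q.apply_order_ne_zero hq0
        ((iteratedDeriv_eq_zero_iff' hq q.order).mp (h q.order hlt))

lemma iteratedDeriv_zero_fun (k : ℕ) : iteratedDeriv k (fun _ : ℂ => (0:ℂ)) = fun _ => 0 := by
  induction k with
  | zero => rfl
  | succ n ih =>
    rw [iteratedDeriv_succ', deriv_const']
    exact ih

lemma iteratedDeriv_cmul (k : ℕ) (c : ℂ) {f : ℂ → ℂ} (hf : ContDiff ℂ ⊤ f) :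
    iteratedDeriv k (fun z => c * f z) = fun z => c * iteratedDeriv k f z := by
  induction k with
  | zero => simp [iteratedDeriv_zero]
  | succ n ih =>
    rw [iteratedDeriv_succ, ih, iteratedDeriv_succ]
    funext z
    exact deriv_const_mul c ((hf.differentiable_iteratedDeriv n (by simp)) z)

lemma iteratedDeriv_monomial_high : ∀ j k : ℕ, j < k →
    iteratedDeriv k (fun z : ℂ => z ^ j) = fun _ => 0 := by
  intro j
  induction j with
  | zero =>
    intro k hk
    obtain ⟨k', rfl⟩ : ∃ k', k = k' + 1 := ⟨k - 1, by omega⟩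
    rw [iteratedDeriv_succ']
    have hz : deriv (fun z : ℂ => z ^ 0) = fun _ : ℂ => (0:ℂ) := by
      funext z; simp
    rw [hz, iteratedDeriv_zero_fun]
  | succ j ih =>
    intro k hk
    obtain ⟨k', rfl⟩ : ∃ k', k = k' + 1 := ⟨k - 1, by omega⟩
    rw [iteratedDeriv_succ', show deriv (fun z : ℂ => z ^ (j + 1)) = fun x : ℂ => ((j + 1 : ℕ) : ℂ) * x ^ (j + 1 - 1) from funext fun x => deriv_pow_field (j + 1)]
    have he : (fun x : ℂ => ((j + 1 : ℕ) : ℂ) * x ^ (j + 1 - 1)) = fun x : ℂ => ((j:ℂ)+1) * x ^ j := by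
      funext x; push_cast; norm_num
    have hc : ContDiff ℂ ⊤ (fun z : ℂ => z ^ j) := by
      have h1 := (contDiff_id (𝕜 := ℂ) (E := ℂ) (n := ⊤)).pow j
      simpa using h1
    rw [he, iteratedDeriv_cmul k' ((j:ℂ)+1) hc, ih k' (by omega)]
    funext z; simp

lemma analyticAt_monomial (j : ℕ) : AnalyticAt ℂ (fun z : ℂ => z ^ j) 0 :=
  (analyticAt_id ..).pow _

lemma order_monomial (j : ℕ) : analyticOrderAt (fun z : ℂ => z ^ j) 0 = j := by
  rw [(analyticAt_monomial j).analyticOrderAt_eq_natCast]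
  exact ⟨fun _ => 1, analyticAt_const, one_ne_zero,
    Eventually.of_forall fun z => by simp⟩

lemma iteratedDeriv_monomial_ne (j k : ℕ) (hkj : k ≠ j) :
    iteratedDeriv k (fun z : ℂ => z ^ j) 0 = 0 := by
  rcases lt_or_gt_of_ne hkj with h | h
  · exact (order_le_iff (analyticAt_monomial j) j).mp (le_of_eq (order_monomial j).symm) k h
  · rw [iteratedDeriv_monomial_high j k h]

end Aux

lemma cuspBS_half (p : ℕ) (hp : 2 < p) (hodd : Odd p) : CuspBS p ((p - 1) / 2) := by
  intro g ψ hg hψ hg0 hbd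
  obtain ⟨C, hC⟩ := hbd
  set μ := (p - 1) / 2 with hμ
  obtain ⟨b, hb⟩ := hodd
  have hμ2 : μ * 2 = p - 1 := by omega
  by_cases hψ0 : ∀ᶠ t in 𝓝 (0:ℂ), ψ t = 0
  · refine ⟨fun _ => 0, ⟨analyticAt_const, fun k _ _ => by rw [iteratedDeriv_zero_fun]⟩, ?_⟩
    filter_upwards [hψ0] with t ht
    simp [ht]
  · -- g is not eventually zero
    have hgne : ¬ ∀ᶠ t in 𝓝 (0:ℂ), g t = 0 := by
      intro h
      apply hψ0
      filter_upwards [h, hC] with t ht hbt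
      have h0 : ‖ψ t‖ ≤ 0 := by
        simpa [ht, zero_pow (by omega : 1 + μ ≠ 0)] using hbt
      simpa using le_antisymm h0 (norm_nonneg _)
    obtain ⟨m, hm⟩ : ∃ m : ℕ, analyticOrderAt ψ 0 = m := by
      have h := analyticOrderAt_eq_top.not.mpr hψ0
      obtain ⟨m, hm⟩ := WithTop.ne_top_iff_exists.mp h
      exact ⟨m, hm.symm⟩
    obtain ⟨n, hn⟩ : ∃ n : ℕ, analyticOrderAt g 0 = n := by
      have h := analyticOrderAt_eq_top.not.mpr hgne
      obtain ⟨n, hn⟩ := WithTop.ne_top_iff_exists.mp h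
      exact ⟨n, hn.symm⟩
    obtain ⟨v, hv, hv0, hψeq⟩ := (hψ.1.analyticOrderAt_eq_natCast).mp hm
    obtain ⟨u, hu, hu0, hgeq⟩ := (hg.1.analyticOrderAt_eq_natCast).mp hn
    simp only [sub_zero, smul_eq_mul] at hψeq hgeq
    have hn2 : 2 ≤ n := by
      have h2 : ((2:ℕ) : ℕ∞) ≤ analyticOrderAt g 0 := by
        apply (order_le_iff hg.1 2).mpr
        intro k hk
        interval_cases k
        · simpa [iteratedDeriv_zero] using hg0
        · exact hg.2 1 (by omega) odd_one
      rw [hn] at h2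
      exact_mod_cast h2
    have hmn : (1 + μ) * n ≤ m := by
      by_contra hlt
      push_neg at hlt
      set d := (1 + μ) * n - m with hd
      have hd1 : 1 ≤ d := by omega
      have hbound : ∀ᶠ z in 𝓝[≠] (0:ℂ),
          ‖v z‖ ≤ C * (‖z‖ ^ d * ‖u z‖ ^ (1 + μ)) := by
        rw [eventually_nhdsWithin_iff]
        filter_upwards [hC, hψeq, hgeq] with z h1 h2 h3 hz
        have hz0 : z ≠ 0 := hz
        have hzpos : 0 < ‖z‖ ^ m := pow_pos (norm_pos_iff.mpr hz0) m
        rw [h2, h3, norm_mul, norm_pow, norm_mul, norm_pow, mul_pow, ← pow_mul] at h1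
        have hexp : n * (1 + μ) = m + d := by
          have : (1 + μ) * n = n * (1 + μ) := by ring
          omega
        rw [hexp, pow_add] at h1
        refine le_of_mul_le_mul_left ?_ hzpos
        calc ‖z‖ ^ m * ‖v z‖
            ≤ C * (‖z‖ ^ m * ‖z‖ ^ d * ‖u z‖ ^ (1 + μ)) := h1
          _ = ‖z‖ ^ m * (C * (‖z‖ ^ d * ‖u z‖ ^ (1 + μ))) := by
              ring
      have hlim : Tendsto (fun z : ℂ => C * (‖z‖ ^ d * ‖u z‖ ^ (1 + μ)))
          (𝓝[≠] (0:ℂ)) (𝓝 0) := by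
        have h1 : Tendsto (fun z : ℂ => ‖z‖ ^ d) (𝓝 (0:ℂ))
            (𝓝 (‖(0:ℂ)‖ ^ d)) := (continuous_norm.pow d).tendsto 0
        have h2 : Tendsto (fun z : ℂ => ‖u z‖ ^ (1 + μ)) (𝓝 (0:ℂ))
            (𝓝 (‖u 0‖ ^ (1 + μ))) :=
          ((continuous_norm.continuousAt.comp hu.continuousAt).pow (1 + μ)).tendsto
        have h3 := (tendsto_const_nhds (x := C)).mul (h1.mul h2)
        have h4 : C * (‖(0:ℂ)‖ ^ d * ‖u 0‖ ^ (1 + μ)) = 0 := by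
          simp [zero_pow (by omega : d ≠ 0)]
        rw [h4] at h3
        exact h3.mono_left nhdsWithin_le_nhds
      have hv00 : Tendsto v (𝓝[≠] (0:ℂ)) (𝓝 0) := squeeze_zero_norm' hbound hlim
      exact hv0 (tendsto_nhds_unique hv.continuousAt.continuousWithinAt hv00)
    have hnm : n ≤ m := le_trans (by nlinarith) hmn
    refine ⟨fun z => z ^ (m - n) * (v z * (u z)⁻¹), ⟨?_, ?_⟩, ?_⟩
    · exact ((analyticAt_id ..).pow _).mul (hv.mul (hu.inv hu0))
    · have hρA : AnalyticAt ℂ (fun z : ℂ => z ^ (m - n) * (v z * (u z)⁻¹)) 0 :=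
        ((analyticAt_id ..).pow _).mul (hv.mul (hu.inv hu0))
      have hρord : analyticOrderAt (fun z : ℂ => z ^ (m - n) * (v z * (u z)⁻¹)) 0 = ((m - n : ℕ) : ℕ∞) := by
        rw [hρA.analyticOrderAt_eq_natCast]
        refine ⟨fun z => v z * (u z)⁻¹, hv.mul (hu.inv hu0),
          mul_ne_zero hv0 (inv_ne_zero hu0), Eventually.of_forall fun z => by simp⟩
      intro k hk hkodd
      have hp1 : ((p - 1 : ℕ) : ℕ∞) ≤ analyticOrderAt (fun z : ℂ => z ^ (m - n) * (v z * (u z)⁻¹)) 0 := by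
        rw [hρord, Nat.cast_le]
        have h1 : μ * 2 ≤ μ * n := Nat.mul_le_mul_left μ hn2
        have h2 : (1 + μ) * n = n + μ * n := by ring
        omega
      refine (order_le_iff hρA (p - 1)).mp hp1 k ?_
      obtain ⟨a, ha⟩ := hkodd
      omega
    · filter_upwards [hψeq, hgeq, hu.continuousAt.eventually_ne hu0] with z h1 h2 h3
      rw [h1, h2, show m = n + (m - n) by omega, pow_add]
      field_simp
      rw [Nat.add_sub_cancel_left]
      ring

lemma cuspBS_lower (p : ℕ) (hp : 2 < p) (hodd : Odd p) (μ : ℕ) (h : CuspBS p μ) :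
    (p - 1) / 2 ≤ μ := by
  by_contra hlt
  push_neg at hlt
  obtain ⟨b, hb⟩ := hodd
  have h2 : 2 * (1 + μ) ≤ p - 1 := by omega
  have hg2 : InCusp p (fun t : ℂ => t ^ 2) :=
    ⟨(analyticAt_id ..).pow _, fun k _ hk =>
      iteratedDeriv_monomial_ne 2 k (by obtain ⟨a, ha⟩ := hk; omega)⟩
  have hgp : InCusp p (fun t : ℂ => t ^ p) :=
    ⟨(analyticAt_id ..).pow _, fun k hk _ => iteratedDeriv_monomial_ne p k (by omega)⟩
  have hbound : ∃ C : ℝ, ∀ᶠ t in 𝓝 (0:ℂ),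
      ‖t ^ p‖ ≤ C * ‖t ^ 2‖ ^ (1 + μ) := by
    refine ⟨1, ?_⟩
    have hball : ∀ᶠ t : ℂ in 𝓝 0, ‖t‖ ≤ 1 := by
      filter_upwards [Metric.closedBall_mem_nhds (0:ℂ) one_pos] with t ht
      simpa [Complex.dist_eq] using ht
    filter_upwards [hball] with t ht
    rw [norm_pow, norm_pow, one_mul, ← pow_mul]
    exact pow_le_pow_of_le_one (norm_nonneg t) ht (by omega)
  obtain ⟨ρ, hρ, hev⟩ := h _ _ hg2 hgp (by simp) hbound
  have hne : ∀ᶠ t in 𝓝[≠] (0:ℂ), ρ t = t ^ (p - 2) := by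
    rw [eventually_nhdsWithin_iff]
    filter_upwards [hev] with t ht ht0
    have ht0' : t ≠ 0 := ht0
    have h2' : t ^ p = t ^ 2 * t ^ (p - 2) := by
      rw [← pow_add]; congr 1; omega
    exact mul_left_cancel₀ (pow_ne_zero 2 ht0') (by rw [← ht, h2'])
  have hρ0 : ρ 0 = 0 := by
    have h1 : Tendsto ρ (𝓝[≠] (0:ℂ)) (𝓝 (ρ 0)) := hρ.1.continuousAt.continuousWithinAt
    have h2' : Tendsto ρ (𝓝[≠] (0:ℂ)) (𝓝 0) := by
      refine Tendsto.congr' (hne.mono fun t ht => ht.symm) ?_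
      have h3 : Tendsto (fun t : ℂ => t ^ (p - 2)) (𝓝 0) (𝓝 ((0:ℂ) ^ (p - 2))) :=
        (continuous_pow _).tendsto 0
      rw [zero_pow (by omega : p - 2 ≠ 0)] at h3
      exact h3.mono_left nhdsWithin_le_nhds
    exact tendsto_nhds_unique h1 h2'
  have hρeq : ρ =ᶠ[𝓝 (0:ℂ)] fun t => t ^ (p - 2) := by
    rw [eventually_nhdsWithin_iff] at hne
    filter_upwards [hne] with t ht
    by_cases h0 : t = 0
    · subst h0
      simp [hρ0, zero_pow (by omega : p - 2 ≠ 0)]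
    · exact ht h0
  have hord : analyticOrderAt ρ 0 = ((p - 2 : ℕ) : ℕ∞) := by
    rw [hρ.1.analyticOrderAt_eq_natCast]
    exact ⟨fun _ => 1, analyticAt_const, one_ne_zero, by
      filter_upwards [hρeq] with t ht; simp [ht]⟩
  have hlow : ((p - 1 : ℕ) : ℕ∞) ≤ analyticOrderAt ρ 0 := by
    apply (order_le_iff hρ.1 _).mpr
    intro k hk
    rcases eq_or_ne k (p - 2) with rfl | hne'
    · exact hρ.2 _ (by omega) ⟨b - 1, by omega⟩
    · exact (order_le_iff hρ.1 (p - 2)).mp (le_of_eq hord.symm) k (by omega)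
  rw [hord, Nat.cast_le] at hlow
  omega

/- STATEMENT 3: for `p > 2` odd, the local Briançon–Skoda number of
`R = ℂ[x,y]/(x² - y^p)` localized at `(x,y)` is exactly `(p-1)/2`: it is the
smallest `μ̃₀` for which the Briançon–Skoda property holds. -/
theorem stmt3 (p : ℕ) (hp : 2 < p) (hodd : Odd p) :
    IsLeast {μ : ℕ | CuspBS p μ} ((p - 1) / 2) :=
  ⟨cuspBS_half p hp hodd, fun μ hμ => cuspBS_lower p hp hodd μ hμ⟩
end

section
/- Let $2 \le m \le n$ and $d \ge 2$, and consider the polynomials $F_1 = z_1^d$, $F_j = z_{j-1} z_m^{d-1} - z_j^d$ for $2 \le j \le m-1$, and $F_m = z_{m-1} z_m^{d-1} - 1$ in $\mathbb{C}[z_1,\dots,z_n]$. If $Q_1,\dots,Q_m$ are polynomials with $F_1 Q_1 + \cdots + F_m Q_m = 1$, then $\deg Q_1 \ge d^m - d$, and hence $\deg(F_1 Q_1) \ge d^m$. -/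
set_option maxHeartbeats 1000000

open MvPolynomial

/-- Kollár's polynomials `F₁ = z₁^d`, `F_j = z_{j-1} z_m^{d-1} - z_j^d` for
`2 ≤ j ≤ m-1`, `F_m = z_{m-1} z_m^{d-1} - 1`, in `ℂ[z₁,…,z_n]` (indices shifted to
start at `0`: variable `z_j` is `X ⟨j-1⟩`, polynomial `F_j` is `KollarF ⟨j-1⟩`). -/
noncomputable def KollarF (n m d : ℕ) (hm : 2 ≤ m) (hmn : m ≤ n) :
    Fin m → MvPolynomial (Fin n) ℂ := fun j =>
  if (j : ℕ) = 0 then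
    X (Fin.castLE hmn j) ^ d
  else if (j : ℕ) = m - 1 then
    X (⟨m - 2, by omega⟩ : Fin n) * X (⟨m - 1, by omega⟩ : Fin n) ^ (d - 1) - 1
  else
    X (⟨(j : ℕ) - 1, by omega⟩ : Fin n) * X (⟨m - 1, by omega⟩ : Fin n) ^ (d - 1)
      - X (Fin.castLE hmn j) ^ d

section Aux

/-- The Kollár curve substitution into the rational function field. -/
noncomputable def kolV (n m d : ℕ) : Fin n → RatFunc ℂ := fun j =>
  if (j : ℕ) < m - 1 then
    algebraMap (Polynomial ℂ) (RatFunc ℂ) (Polynomial.X ^ (d ^ (m - 1 - (j : ℕ)) - 1))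
  else if (j : ℕ) = m - 1 then (algebraMap (Polynomial ℂ) (RatFunc ℂ) Polynomial.X)⁻¹
  else 0

lemma kolI_inj : Function.Injective (algebraMap (Polynomial ℂ) (RatFunc ℂ)) :=
  IsFractionRing.injective (Polynomial ℂ) (RatFunc ℂ)

lemma kolX_ne : (algebraMap (Polynomial ℂ) (RatFunc ℂ)) Polynomial.X ≠ 0 :=
  (map_ne_zero_iff _ kolI_inj).mpr Polynomial.X_ne_zero

/-- Cancellation of inverse powers of `X`. -/
lemma kol_cancel (a b : ℕ) (hba : b ≤ a) :
    algebraMap (Polynomial ℂ) (RatFunc ℂ) (Polynomial.X ^ a) *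
      ((algebraMap (Polynomial ℂ) (RatFunc ℂ) Polynomial.X)⁻¹) ^ b =
    algebraMap (Polynomial ℂ) (RatFunc ℂ) (Polynomial.X ^ (a - b)) := by
  have h : a - b + b = a := Nat.sub_add_cancel hba
  rw [← h, pow_add, map_mul, map_pow, map_pow, mul_assoc, ← mul_pow,
    mul_inv_cancel₀ kolX_ne, one_pow, mul_one, h, map_pow]

/-- Multiplying the curve substitution by `X` lands in the polynomial subring. -/
lemma kol_mulX (n m d : ℕ) (j : Fin n) :
    ∃ w : Polynomial ℂ,
      algebraMap (Polynomial ℂ) (RatFunc ℂ) Polynomial.X * kolV n m d j =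
        algebraMap (Polynomial ℂ) (RatFunc ℂ) w := by
  unfold kolV
  split_ifs with h1 h2
  · exact ⟨Polynomial.X * Polynomial.X ^ (d ^ (m - 1 - (j : ℕ)) - 1), (map_mul _ _ _).symm⟩
  · exact ⟨1, by rw [map_one, mul_inv_cancel₀ kolX_ne]⟩
  · exact ⟨0, by rw [map_zero, mul_zero]⟩

/-- Key degree bound: `X^(totalDegree p) * p(curve)` is a polynomial. -/
lemma kol_key (n m d : ℕ) (p : MvPolynomial (Fin n) ℂ) :
    ∃ g : Polynomial ℂ,
      (algebraMap (Polynomial ℂ) (RatFunc ℂ) Polynomial.X) ^ p.totalDegree *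
        aeval (kolV n m d) p = algebraMap (Polynomial ℂ) (RatFunc ℂ) g := by
  classical
  set i := algebraMap (Polynomial ℂ) (RatFunc ℂ) with hidef
  set D := p.totalDegree with hD
  choose w hw using kol_mulX n m d
  have hmono : ∀ α : Fin n →₀ ℕ,
      ∃ g : Polynomial ℂ,
        (i Polynomial.X) ^ D * aeval (kolV n m d) (monomial α (coeff α p)) = i g := by
    intro α
    by_cases hα : α ∈ p.support
    · set c := coeff α p
      have hS : (∑ j, α j) ≤ D := by
        have := MvPolynomial.le_totalDegree hα
        rwa [Finsupp.sum_fintype _ _ (fun _ => rfl)] at this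
      refine ⟨Polynomial.C c * (Polynomial.X ^ (D - ∑ j, α j) * ∏ j, w j ^ α j), ?_⟩
      rw [aeval_monomial, Finsupp.prod_fintype _ _ (fun _ => pow_zero _)]
      have hc : algebraMap ℂ (RatFunc ℂ) c = i (Polynomial.C c) := by
        rw [← Polynomial.algebraMap_eq, ← IsScalarTower.algebraMap_apply]
      rw [hc, map_mul, map_mul, map_pow, map_prod]
      have hprod : ∀ j : Fin n,
          i (w j ^ α j) = (i Polynomial.X) ^ α j * kolV n m d j ^ α j := by
        intro j
        rw [map_pow, ← hw j, mul_pow]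
      calc (i Polynomial.X) ^ D * (i (Polynomial.C c) * ∏ j, kolV n m d j ^ α j)
          = i (Polynomial.C c) *
              (((i Polynomial.X) ^ (D - ∑ j, α j) * (i Polynomial.X) ^ (∑ j, α j)) *
                ∏ j, kolV n m d j ^ α j) := by
            rw [← pow_add, Nat.sub_add_cancel hS]; ring
        _ = i (Polynomial.C c) *
              ((i Polynomial.X) ^ (D - ∑ j, α j) *
                ∏ j, ((i Polynomial.X) ^ α j * kolV n m d j ^ α j)) := by
            rw [← Finset.prod_pow_eq_pow_sum, Finset.prod_mul_distrib]; ring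
        _ = i (Polynomial.C c) *
              ((i Polynomial.X) ^ (D - ∑ j, α j) * ∏ j, i (w j ^ α j)) := by
            rw [Finset.prod_congr rfl fun j _ => (hprod j).symm]
    · refine ⟨0, ?_⟩
      rw [MvPolynomial.notMem_support_iff.mp hα, map_zero, map_zero, map_zero, mul_zero]
  choose g hg using hmono
  refine ⟨∑ α ∈ p.support, g α, ?_⟩
  conv_lhs => rw [p.as_sum]
  rw [map_sum, Finset.mul_sum, map_sum]
  exact Finset.sum_congr rfl fun α _ => hg α

end Aux

/- STATEMENT 4: if `Q₁,…,Q_m` are polynomials with `∑ F_j Q_j = 1`, then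
`deg Q₁ ≥ d^m - d`, and hence `deg (F₁ Q₁) ≥ d^m`. -/
theorem stmt4 (n m d : ℕ) (hm : 2 ≤ m) (hmn : m ≤ n) (hd : 2 ≤ d)
    (Q : Fin m → MvPolynomial (Fin n) ℂ)
    (hQ : ∑ j, KollarF n m d hm hmn j * Q j = 1) :
    d ^ m - d ≤ (Q ⟨0, by omega⟩).totalDegree ∧
      d ^ m ≤ (KollarF n m d hm hmn ⟨0, by omega⟩ * Q ⟨0, by omega⟩).totalDegree := by
  classical
  set i := algebraMap (Polynomial ℂ) (RatFunc ℂ) with hidef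
  set v := kolV n m d with hvdef
  set N := d ^ m - d with hN
  have hd1 : 1 ≤ d := by omega
  have hdm : d ≤ d ^ m := by
    calc d = d ^ 1 := (pow_one d).symm
    _ ≤ d ^ m := Nat.pow_le_pow_right hd1 (by omega)
  have hdmlt : d < d ^ m := by
    calc d < d * d := by nlinarith
    _ = d ^ 2 := (sq d).symm
    _ ≤ d ^ m := Nat.pow_le_pow_right hd1 hm
  -- evaluation of F₀
  have hF0 : aeval v (KollarF n m d hm hmn ⟨0, by omega⟩) = i (Polynomial.X ^ N) := by
    have h0 : ((⟨0, by omega⟩ : Fin m) : ℕ) = 0 := rfl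
    rw [KollarF, if_pos h0, map_pow, aeval_X]
    have hv0 : v (Fin.castLE hmn ⟨0, by omega⟩) = i (Polynomial.X ^ (d ^ (m - 1) - 1)) := by
      rw [hvdef, kolV]
      have h1 : ((Fin.castLE hmn (⟨0, by omega⟩ : Fin m)) : ℕ) = 0 := rfl
      rw [h1, if_pos (by omega : 0 < m - 1), Nat.sub_zero]
    rw [hv0, ← map_pow, ← pow_mul]
    have h2 : (d ^ (m - 1) - 1) * d = N := by
      rw [hN, Nat.sub_mul, one_mul, ← pow_succ]
      have : m - 1 + 1 = m := by omega
      rw [this]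
    rw [h2]
  -- evaluation of the other Fⱼ is zero
  have hFj : ∀ j : Fin m, (j : ℕ) ≠ 0 → aeval v (KollarF n m d hm hmn j) = 0 := by
    intro j hj
    rw [KollarF, if_neg hj]
    by_cases hjm : (j : ℕ) = m - 1
    · rw [if_pos hjm, map_sub, map_one, map_mul, map_pow, aeval_X, aeval_X]
      have hv1 : v (⟨m - 2, by omega⟩ : Fin n) = i (Polynomial.X ^ (d - 1)) := by
        rw [hvdef, kolV]
        simp only
        rw [if_pos (by omega : m - 2 < m - 1)]
        have h1 : m - 1 - (m - 2) = 1 := by omega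
        rw [h1, pow_one]
      have hv2 : v (⟨m - 1, by omega⟩ : Fin n) = (i Polynomial.X)⁻¹ := by
        rw [hvdef, kolV]
        simp only
        rw [if_neg (by omega : ¬(m - 1 < m - 1))]
        simp [hidef]
      rw [hv1, hv2, kol_cancel (d - 1) (d - 1) le_rfl, Nat.sub_self, pow_zero, map_one,
        sub_self]
    · rw [if_neg hjm, map_sub, map_mul, map_pow, map_pow, aeval_X, aeval_X, aeval_X]
      have hjlt : (j : ℕ) < m := j.2
      have hj2 : (j : ℕ) ≤ m - 2 := by omega
      have hv1 : v (⟨(j : ℕ) - 1, by omega⟩ : Fin n)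
          = i (Polynomial.X ^ (d ^ (m - (j : ℕ)) - 1)) := by
        rw [hvdef, kolV]
        simp only
        rw [if_pos (by omega : (j : ℕ) - 1 < m - 1)]
        have h1 : m - 1 - ((j : ℕ) - 1) = m - (j : ℕ) := by omega
        rw [h1]
      have hv2 : v (⟨m - 1, by omega⟩ : Fin n) = (i Polynomial.X)⁻¹ := by
        rw [hvdef, kolV]
        simp only
        rw [if_neg (by omega : ¬(m - 1 < m - 1))]
        simp [hidef]
      have hv3 : v (Fin.castLE hmn j) = i (Polynomial.X ^ (d ^ (m - 1 - (j : ℕ)) - 1)) := by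
        rw [hvdef, kolV]
        rw [Fin.coe_castLE, if_pos (by omega : (j : ℕ) < m - 1)]
      have hdj : d ≤ d ^ (m - (j : ℕ)) := by
        calc d = d ^ 1 := (pow_one d).symm
        _ ≤ d ^ (m - (j : ℕ)) := Nat.pow_le_pow_right hd1 (by omega)
      rw [hv1, hv2, hv3, kol_cancel _ (d - 1) (by omega), ← map_pow, ← pow_mul,
        sub_eq_zero]
      have hpow : d ^ (m - 1 - (j : ℕ)) * d = d ^ (m - (j : ℕ)) := by
        rw [← pow_succ]
        congr 1
        omega
      have h3 : d ^ (m - (j : ℕ)) - 1 - (d - 1) = (d ^ (m - 1 - (j : ℕ)) - 1) * d := by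
        rw [Nat.sub_mul, one_mul, hpow]
        omega
      rw [h3]
  -- the main identity on the curve
  have hmain : i (Polynomial.X ^ N) * aeval v (Q ⟨0, by omega⟩) = 1 := by
    have h1 := congrArg (aeval v) hQ
    rw [map_sum, map_one] at h1
    have h2 : ∑ j, aeval v (KollarF n m d hm hmn j * Q j)
        = aeval v (KollarF n m d hm hmn ⟨0, by omega⟩ * Q ⟨0, by omega⟩) := by
      apply Fintype.sum_eq_single
      intro j hj
      have hj0 : (j : ℕ) ≠ 0 := fun h => hj (Fin.ext h)
      rw [map_mul, hFj j hj0, zero_mul]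
    rw [h2, map_mul, hF0] at h1
    exact h1
  set D := (Q ⟨0, by omega⟩ : MvPolynomial (Fin n) ℂ).totalDegree with hDdef
  -- part 1
  have hpart1 : N ≤ D := by
    by_contra hcon
    push_neg at hcon
    obtain ⟨g, hg⟩ := kol_key n m d (Q ⟨0, by omega⟩)
    rw [← hvdef, ← hidef, ← hDdef] at hg
    have hkey : i (g * Polynomial.X ^ (N - D)) = 1 := by
      rw [map_mul, ← hg, map_pow]
      calc (i Polynomial.X) ^ D * aeval v (Q ⟨0, by omega⟩) * (i Polynomial.X) ^ (N - D)
          = (i Polynomial.X) ^ (D + (N - D)) * aeval v (Q ⟨0, by omega⟩) := by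
            rw [pow_add]; ring
        _ = i (Polynomial.X ^ N) * aeval v (Q ⟨0, by omega⟩) := by
            rw [map_pow]
            have : D + (N - D) = N := by omega
            rw [this]
        _ = 1 := hmain
    have hgX : g * Polynomial.X ^ (N - D) = 1 := kolI_inj (by rw [hkey, map_one])
    have hunit : IsUnit (Polynomial.X : Polynomial ℂ) := by
      refine IsUnit.of_mul_eq_one (g * Polynomial.X ^ (N - D - 1)) ?_
      have hND : N - D = N - D - 1 + 1 := by omega
      rw [hND, pow_succ] at hgX
      rw [← hgX]
      ring
    exact Polynomial.not_isUnit_X hunit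
  refine ⟨hpart1, ?_⟩
  -- part 2
  have hQ0 : Q ⟨0, by omega⟩ ≠ 0 := by
    intro h
    rw [hDdef, h, totalDegree_zero] at hpart1
    omega
  obtain ⟨α, hαmem, hαsum⟩ := Finset.exists_mem_eq_sup
    (Q ⟨0, by omega⟩ : MvPolynomial (Fin n) ℂ).support
    (MvPolynomial.support_nonempty.mpr hQ0) (fun s => s.sum fun _ e => e)
  have hF0form : KollarF n m d hm hmn ⟨0, by omega⟩
      = X (Fin.castLE hmn ⟨0, by omega⟩) ^ d := by
    rw [KollarF, if_pos rfl]
  have hco : coeff (Finsupp.single (Fin.castLE hmn (⟨0, by omega⟩ : Fin m)) d + α)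
      (KollarF n m d hm hmn ⟨0, by omega⟩ * Q ⟨0, by omega⟩) ≠ 0 := by
    rw [hF0form, X_pow_eq_monomial, coeff_monomial_mul, one_mul]
    exact MvPolynomial.mem_support_iff.mp hαmem
  have hle := MvPolynomial.le_totalDegree (MvPolynomial.mem_support_iff.mpr hco)
  have hsum : (Finsupp.single (Fin.castLE hmn (⟨0, by omega⟩ : Fin m)) d + α).sum
      (fun _ e => e) = d + α.sum (fun _ e => e) := by
    rw [Finsupp.sum_add_index' (fun _ => rfl) (fun _ _ _ => rfl),
      Finsupp.sum_single_index rfl]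
  have hαD : α.sum (fun _ e => e) = D := by
    rw [hDdef, totalDegree, hαsum]
  rw [hsum, hαD] at hle
  omega
end
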